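/- Let ρ : ℝ^d → (0,∞) be a Borel radius function with constant C (i.e., C⁻¹ρ(x) ≤ ρ(y) ≤ Cρ(x) whenever |y−x| < ρ(x)), and let d_ρ be the associated Riemannian-type distance, d_ρ(x,y) = inf over piecewise C¹ curves γ from x to y of ∫ |γ'(t)|/ρ(γ(t)) dt. Then d_ρ is a metric, and for all x and all r ≤ 1: B_ρ(x, C⁻¹r) ⊆ B(x, rρ(x)) ⊆ B_ρ(x, Cr), where B_ρ denotes metric balls for d_ρ and B denotes Euclidean balls. -/

import Mathlib

open MeasureTheory

/-- A piecewise `C¹` curve parametrized by `[0,1]`. -/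
def PiecewiseC1 {d : ℕ} (γ : ℝ → EuclideanSpace ℝ (Fin d)) : Prop :=
  ContinuousOn γ (Set.Icc 0 1) ∧
    ∃ (n : ℕ) (t : Fin (n + 1) → ℝ), StrictMono t ∧ t 0 = 0 ∧ t (Fin.last n) = 1 ∧
      ∀ i : Fin n, ContDiffOn ℝ 1 γ (Set.Icc (t i.castSucc) (t i.succ))

/-- The Riemannian-type distance associated to a radius function `ρ`:
`d_ρ(x,y) = inf_γ ∫ |γ'(t)|/ρ(γ(t)) dt` over piecewise `C¹` curves from `x` to `y`. -/
noncomputable def dRho {d : ℕ} (ρ : EuclideanSpace ℝ (Fin d) → ℝ)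
    (x y : EuclideanSpace ℝ (Fin d)) : ℝ :=
  sInf {L | ∃ γ : ℝ → EuclideanSpace ℝ (Fin d), PiecewiseC1 γ ∧ γ 0 = x ∧ γ 1 = y ∧
    L = ∫ t in (0 : ℝ)..1, ‖deriv γ t‖ / ρ (γ t)}

open Set intervalIntegral
open scoped Interval

namespace StmtAux

lemma exists_piece {n : ℕ} {t : Fin (n+1) → ℝ} (ht : StrictMono t) {s : ℝ}
    (h0 : t 0 ≤ s) (h1 : s < t (Fin.last n)) :
    ∃ i : Fin n, s ∈ Ico (t i.castSucc) (t i.succ) := by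
  classical
  have hne : (Finset.univ.filter (fun j : Fin (n+1) => t j ≤ s)).Nonempty :=
    ⟨0, by simp [h0]⟩
  set P := Finset.univ.filter (fun j : Fin (n+1) => t j ≤ s) with hP
  set j := P.max' hne with hj
  have hjs : t j ≤ s := by
    have := P.max'_mem hne
    simpa [hP] using this
  have hjn : (j : ℕ) < n := by
    rcases lt_or_eq_of_le (Nat.lt_succ_iff.mp j.isLt) with h | h
    · exact h
    · exfalso
      have : j = Fin.last n := Fin.ext h
      rw [this] at hjs; linarith
  refine ⟨⟨j, hjn⟩, ?_, ?_⟩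
  · have : (⟨j, hjn⟩ : Fin n).castSucc = j := by ext; rfl
    rw [this]; exact hjs
  · by_contra h
    push_neg at h
    have hmem : (⟨j, hjn⟩ : Fin n).succ ∈ P := by
      simp only [hP, Finset.mem_filter, Finset.mem_univ, true_and]
      exact h
    have := P.le_max' _ hmem
    rw [← hj] at this
    have h2 : (j : ℕ) + 1 ≤ (j : ℕ) := this
    omega

lemma piece_unique {n : ℕ} {t : Fin (n+1) → ℝ} (ht : StrictMono t) {s : ℝ}
    {i j : Fin n} (hi : s ∈ Ico (t i.castSucc) (t i.succ))
    (hj : s ∈ Ico (t j.castSucc) (t j.succ)) : i = j := by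
  by_contra hne
  rcases lt_or_gt_of_ne hne with h | h
  · have : i.succ ≤ j.castSucc := by
      simp only [Fin.le_def, Fin.val_succ, Fin.coe_castSucc]
      exact h
    have := ht.monotone this
    have := hj.1
    have := hi.2
    linarith
  · have : j.succ ≤ i.castSucc := by
      simp only [Fin.le_def, Fin.val_succ, Fin.coe_castSucc]
      exact h
    have := ht.monotone this
    have := hi.1
    have := hj.2
    linarith

variable {d : ℕ} {γ : ℝ → EuclideanSpace ℝ (Fin d)}

lemma npos (hγ : PiecewiseC1 γ) : True := trivial

lemma exists_rightDeriv (hγ : PiecewiseC1 γ) :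
    ∃ (g : ℝ → EuclideanSpace ℝ (Fin d)) (M : ℝ) (T : Set ℝ), T.Finite ∧
      (∀ s ∈ Ioo (0:ℝ) 1, HasDerivWithinAt γ (g s) (Ioi s) s) ∧
      (∀ s ∈ Ioo (0:ℝ) 1, s ∉ T → HasDerivAt γ (g s) s) ∧
      (∀ s ∈ Ioo (0:ℝ) 1, ‖g s‖ ≤ M) := by
  classical
  obtain ⟨hc, n, t, ht, ht0, ht1, hp⟩ := hγ
  have hn : 0 < n := by
    rcases Nat.eq_zero_or_pos n with h | h
    · exfalso; subst h; rw [show Fin.last 0 = 0 from rfl] at ht1; rw [ht0] at ht1; norm_num at ht1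
    · exact h
  -- derivWithin on each piece
  set gi : Fin n → ℝ → EuclideanSpace ℝ (Fin d) :=
    fun i => derivWithin γ (Icc (t i.castSucc) (t i.succ)) with hgi
  have hlt : ∀ i : Fin n, t i.castSucc < t i.succ := fun i =>
    ht (Fin.castSucc_lt_succ (i := i))
  have huniq : ∀ i : Fin n, UniqueDiffOn ℝ (Icc (t i.castSucc) (t i.succ)) :=
    fun i => uniqueDiffOn_Icc (hlt i)
  have hgicont : ∀ i : Fin n, ContinuousOn (gi i) (Icc (t i.castSucc) (t i.succ)) :=
    fun i => (hp i).continuousOn_derivWithin (huniq i) le_rfl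
  choose Mi hMi using fun i : Fin n =>
    isCompact_Icc.exists_bound_of_continuousOn (hgicont i)
  set M := Finset.univ.sup' (Finset.univ_nonempty_iff.mpr ⟨⟨0, hn⟩⟩) Mi with hM
  set g : ℝ → EuclideanSpace ℝ (Fin d) :=
    fun s => if h : ∃ i : Fin n, s ∈ Ico (t i.castSucc) (t i.succ) then gi h.choose s else 0
    with hg
  have hgval : ∀ (i : Fin n) (s : ℝ), s ∈ Ico (t i.castSucc) (t i.succ) → g s = gi i s := by
    intro i s hs
    have hex : ∃ i : Fin n, s ∈ Ico (t i.castSucc) (t i.succ) := ⟨i, hs⟩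
    rw [hg]
    simp only [dif_pos hex]
    rw [piece_unique ht hex.choose_spec hs]
  have hdw : ∀ (i : Fin n) (s : ℝ), s ∈ Ico (t i.castSucc) (t i.succ) →
      HasDerivWithinAt γ (gi i s) (Icc (t i.castSucc) (t i.succ)) s := by
    intro i s hs
    exact (((hp i).differentiableOn one_ne_zero) s (Ico_subset_Icc_self hs)).hasDerivWithinAt
  have hfind : ∀ s ∈ Ioo (0:ℝ) 1, ∃ i : Fin n, s ∈ Ico (t i.castSucc) (t i.succ) := by
    intro s hs
    exact exists_piece ht (by rw [ht0]; exact hs.1.le) (by rw [ht1]; exact hs.2)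
  refine ⟨g, M, range t, finite_range t, ?_, ?_, ?_⟩
  · intro s hs
    obtain ⟨i, hi⟩ := hfind s hs
    rw [hgval i s hi]
    exact (hdw i s hi).mono_of_mem_nhdsWithin (Icc_mem_nhdsGT_of_mem hi)
  · intro s hs hT
    obtain ⟨i, hi⟩ := hfind s hs
    rw [hgval i s hi]
    have hlt' : t i.castSucc < s := by
      rcases lt_or_eq_of_le hi.1 with h | h
      · exact h
      · exact absurd (⟨i.castSucc, h⟩ : s ∈ range t) hT
    exact (hdw i s hi).hasDerivAt (Icc_mem_nhds hlt' hi.2)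
  · intro s hs
    obtain ⟨i, hi⟩ := hfind s hs
    rw [hgval i s hi]
    exact le_trans (hMi i s (Ico_subset_Icc_self hi)) (Finset.le_sup' Mi (Finset.mem_univ i))


variable {ρ : EuclideanSpace ℝ (Fin d) → ℝ} {C : ℝ}

lemma one_le_C (hpos : ∀ x, 0 < ρ x)
    (hrad : ∀ x y, dist y x < ρ x → C⁻¹ * ρ x ≤ ρ y ∧ ρ y ≤ C * ρ x) : 1 ≤ C := by
  have h := (hrad 0 0 (by simpa using hpos 0)).2
  nlinarith [hpos (0 : EuclideanSpace ℝ (Fin d))]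

lemma rho_lb (hpos : ∀ x, 0 < ρ x)
    (hrad : ∀ x y, dist y x < ρ x → C⁻¹ * ρ x ≤ ρ y ∧ ρ y ≤ C * ρ x)
    {K : Set (EuclideanSpace ℝ (Fin d))} (hK : IsCompact K) :
    ∃ ε > 0, ∀ z ∈ K, ε ≤ ρ z := by
  have hC : (0:ℝ) < C := lt_of_lt_of_le one_pos (one_le_C hpos hrad)
  rcases eq_empty_or_nonempty K with h | ⟨z0, hz0⟩
  · exact ⟨1, one_pos, by simp [h]⟩
  obtain ⟨F, hFK, hcover⟩ := hK.elim_nhds_subcover (fun z => Metric.ball z (ρ z))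
    (fun z _ => Metric.ball_mem_nhds z (hpos z))
  have hFne : F.Nonempty := by
    obtain ⟨w, hw⟩ := mem_iUnion₂.mp (hcover hz0)
    exact ⟨w, hw.1⟩
  refine ⟨F.inf' hFne (fun z => C⁻¹ * ρ z), ?_, ?_⟩
  · rw [gt_iff_lt, Finset.lt_inf'_iff]
    exact fun w _ => mul_pos (inv_pos.2 hC) (hpos w)
  · intro z hz
    obtain ⟨w, hwF, hw⟩ := mem_iUnion₂.mp (hcover hz)
    exact le_trans (Finset.inf'_le _ hwF) (hrad w z (Metric.mem_ball.mp hw)).1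

lemma null_aux (T : Set ℝ) (hT : T.Finite) : volume (T ∪ {1}) = 0 :=
  measure_union_null (hT.measure_zero volume) (measure_singleton 1)

lemma intervalIntegrable_norm_deriv (hγ : PiecewiseC1 γ) {a b : ℝ}
    (ha : 0 ≤ a) (hab : a ≤ b) (hb : b ≤ 1) :
    IntervalIntegrable (fun s => ‖deriv γ s‖) volume a b := by
  obtain ⟨g, M, T, hTfin, _, hae, hbd⟩ := exists_rightDeriv hγ
  rw [intervalIntegrable_iff_integrableOn_Ioc_of_le hab]
  refine Integrable.mono' (g := fun _ => max M 0)
    ((integrableOn_const_iff).2 (Or.inr measure_Ioc_lt_top))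
    ((measurable_deriv γ).norm.aestronglyMeasurable) ?_
  have h0 : ∀ᵐ s : ℝ, s ∉ T ∪ {1} :=
    measure_eq_zero_iff_ae_notMem.mp (null_aux T hTfin)
  rw [ae_restrict_iff' measurableSet_Ioc]
  filter_upwards [h0] with s hs hsab
  have hsT : s ∉ T := fun h => hs (Or.inl h)
  have hs1 : s ≠ 1 := fun h => hs (Or.inr h)
  have hsIoo : s ∈ Ioo (0:ℝ) 1 :=
    ⟨lt_of_le_of_lt ha hsab.1, lt_of_le_of_ne (le_trans hsab.2 hb) hs1⟩
  rw [(hae s hsIoo hsT).deriv, Real.norm_of_nonneg (norm_nonneg _)]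
  exact le_max_of_le_left (hbd s hsIoo)

lemma intervalIntegrable_integrand (hmeas : Measurable ρ) (hpos : ∀ x, 0 < ρ x)
    (hrad : ∀ x y, dist y x < ρ x → C⁻¹ * ρ x ≤ ρ y ∧ ρ y ≤ C * ρ x)
    (hγ : PiecewiseC1 γ) {a b : ℝ} (ha : 0 ≤ a) (hab : a ≤ b) (hb : b ≤ 1) :
    IntervalIntegrable (fun s => ‖deriv γ s‖ / ρ (γ s)) volume a b := by
  obtain ⟨g, M, T, hTfin, _, hae, hbd⟩ := exists_rightDeriv hγ
  obtain ⟨ε, hε, hεK⟩ := rho_lb hpos hrad (isCompact_Icc.image_of_continuousOn hγ.1)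
  have hsub : Ioc a b ⊆ Icc (0:ℝ) 1 := fun s hs => ⟨le_trans ha hs.1.le, le_trans hs.2 hb⟩
  rw [intervalIntegrable_iff_integrableOn_Ioc_of_le hab]
  have hγm : AEMeasurable γ (volume.restrict (Ioc a b)) :=
    (hγ.1.mono hsub).aemeasurable measurableSet_Ioc
  refine Integrable.mono' (g := fun _ => max M 0 / ε)
    ((integrableOn_const_iff).2 (Or.inr measure_Ioc_lt_top))
    ((measurable_deriv γ).norm.aemeasurable.div
      (hmeas.comp_aemeasurable hγm)).aestronglyMeasurable ?_
  have h0 : ∀ᵐ s : ℝ, s ∉ T ∪ {1} :=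
    measure_eq_zero_iff_ae_notMem.mp (null_aux T hTfin)
  rw [ae_restrict_iff' measurableSet_Ioc]
  filter_upwards [h0] with s hs hsab
  have hsT : s ∉ T := fun h => hs (Or.inl h)
  have hs1 : s ≠ 1 := fun h => hs (Or.inr h)
  have hsIoo : s ∈ Ioo (0:ℝ) 1 :=
    ⟨lt_of_le_of_lt ha hsab.1, lt_of_le_of_ne (le_trans hsab.2 hb) hs1⟩
  have hρ : ε ≤ ρ (γ s) := hεK _ (mem_image_of_mem γ (hsub hsab))
  have hnn : (0:ℝ) ≤ ‖deriv γ s‖ / ρ (γ s) :=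
    div_nonneg (norm_nonneg _) (hpos _).le
  rw [Real.norm_of_nonneg hnn, (hae s hsIoo hsT).deriv]
  exact div_le_div₀ (le_max_right M 0) (le_max_of_le_left (hbd s hsIoo)) hε hρ

lemma chord (hγ : PiecewiseC1 γ) {a b : ℝ} (ha : 0 ≤ a) (hab : a ≤ b) (hb : b ≤ 1) :
    ‖γ b - γ a‖ ≤ ∫ s in a..b, ‖deriv γ s‖ := by
  obtain ⟨g, M, T, hTfin, hright, hae, hbd⟩ := exists_rightDeriv hγ
  have h0 : ∀ᵐ s : ℝ, s ∉ T ∪ {1} :=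
    measure_eq_zero_iff_ae_notMem.mp (null_aux T hTfin)
  have haes : ∀ᵐ s : ℝ, s ∈ Ι a b → g s = deriv γ s := by
    filter_upwards [h0] with s hs hsab
    rw [uIoc_of_le hab] at hsab
    have hsT : s ∉ T := fun h => hs (Or.inl h)
    have hs1 : s ≠ 1 := fun h => hs (Or.inr h)
    have hsIoo : s ∈ Ioo (0:ℝ) 1 :=
      ⟨lt_of_le_of_lt ha hsab.1, lt_of_le_of_ne (le_trans hsab.2 hb) hs1⟩
    exact ((hae s hsIoo hsT).deriv).symm
  have hint : IntervalIntegrable (deriv γ) volume a b := by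
    rw [intervalIntegrable_iff_integrableOn_Ioc_of_le hab]
    refine Integrable.mono' (g := fun _ => max M 0)
      ((integrableOn_const_iff).2 (Or.inr measure_Ioc_lt_top))
      ((measurable_deriv γ).aestronglyMeasurable) ?_
    rw [ae_restrict_iff' measurableSet_Ioc]
    filter_upwards [h0] with s hs hsab
    have hsT : s ∉ T := fun h => hs (Or.inl h)
    have hs1 : s ≠ 1 := fun h => hs (Or.inr h)
    have hsIoo : s ∈ Ioo (0:ℝ) 1 :=
      ⟨lt_of_le_of_lt ha hsab.1, lt_of_le_of_ne (le_trans hsab.2 hb) hs1⟩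
    rw [(hae s hsIoo hsT).deriv]
    exact le_max_of_le_left (hbd s hsIoo)
  have hgint : IntervalIntegrable g volume a b := by
    rw [intervalIntegrable_iff] at hint ⊢
    refine hint.congr ?_
    rw [Filter.EventuallyEq, ae_restrict_iff' measurableSet_uIoc]
    filter_upwards [haes] with s hs hsab
    exact (hs hsab).symm
  have hftc : ∫ s in a..b, g s = γ b - γ a := by
    refine integral_eq_sub_of_hasDeriv_right_of_le hab
      (hγ.1.mono (Icc_subset_Icc ha hb)) (fun s hs => hright s ⟨lt_of_le_of_lt ha hs.1, lt_of_lt_of_le hs.2 hb⟩) hgint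
  calc ‖γ b - γ a‖ = ‖∫ s in a..b, g s‖ := by rw [hftc]
    _ ≤ ∫ s in a..b, ‖g s‖ := norm_integral_le_integral_norm hab
    _ = ∫ s in a..b, ‖deriv γ s‖ := by
        refine integral_congr_ae ?_
        filter_upwards [haes] with s hs hsab
        rw [hs hsab]


lemma _root_.ContDiff.piecewiseC1 (h : ContDiff ℝ 1 γ) : PiecewiseC1 γ := by
  refine ⟨h.continuous.continuousOn, 1, ![0, 1], ?_, by norm_num, by simp [Fin.last], ?_⟩
  · intro i j hij
    fin_cases i <;> fin_cases j <;> simp_all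
  · intro i
    exact h.contDiffOn

def S (ρ : EuclideanSpace ℝ (Fin d) → ℝ) (x y : EuclideanSpace ℝ (Fin d)) : Set ℝ :=
  {L | ∃ γ : ℝ → EuclideanSpace ℝ (Fin d), PiecewiseC1 γ ∧ γ 0 = x ∧ γ 1 = y ∧
    L = ∫ t in (0 : ℝ)..1, ‖deriv γ t‖ / ρ (γ t)}

lemma S_nonneg (hpos : ∀ x, 0 < ρ x) {x y : EuclideanSpace ℝ (Fin d)} :
    ∀ L ∈ S ρ x y, (0:ℝ) ≤ L := by
  rintro L ⟨γ, hγ, hx, hy, rfl⟩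
  exact intervalIntegral.integral_nonneg (by norm_num)
    (fun u _ => div_nonneg (norm_nonneg _) (hpos _).le)

lemma bddBelow_S (hpos : ∀ x, 0 < ρ x) {x y : EuclideanSpace ℝ (Fin d)} :
    BddBelow (S ρ x y) := ⟨0, fun L hL => S_nonneg hpos L hL⟩

lemma seg_hasDerivAt (x y : EuclideanSpace ℝ (Fin d)) (s : ℝ) :
    HasDerivAt (fun s : ℝ => x + s • (y - x)) (y - x) s := by
  simpa using ((hasDerivAt_id s).smul_const (y - x)).const_add x

lemma seg_piecewiseC1 (x y : EuclideanSpace ℝ (Fin d)) :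
    PiecewiseC1 (fun s : ℝ => x + s • (y - x)) :=
  (contDiff_const.add (contDiff_id.smul contDiff_const)).piecewiseC1

lemma seg_mem (x y : EuclideanSpace ℝ (Fin d)) :
    (∫ s in (0:ℝ)..1, ‖y - x‖ / ρ (x + s • (y - x))) ∈ S ρ x y := by
  refine ⟨fun s : ℝ => x + s • (y - x), seg_piecewiseC1 x y, by simp, by simp, ?_⟩
  refine (intervalIntegral.integral_congr (fun s _ => ?_)).symm
  rw [(seg_hasDerivAt x y s).deriv]

lemma S_nonempty (x y : EuclideanSpace ℝ (Fin d)) : (S ρ x y).Nonempty :=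
  ⟨_, seg_mem x y⟩

lemma lower_bound (hmeas : Measurable ρ) (hpos : ∀ x, 0 < ρ x)
    (hrad : ∀ x y, dist y x < ρ x → C⁻¹ * ρ x ≤ ρ y ∧ ρ y ≤ C * ρ x)
    (hγ : PiecewiseC1 γ) {x y : EuclideanSpace ℝ (Fin d)} (hx : γ 0 = x) (hy : γ 1 = y) :
    C⁻¹ * min (‖y - x‖ / ρ x) 1 ≤ ∫ s in (0:ℝ)..1, ‖deriv γ s‖ / ρ (γ s) := by
  have hC : (0:ℝ) < C := lt_of_lt_of_le one_pos (one_le_C hpos hrad)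
  have hρx := hpos x
  set f : ℝ → ℝ := fun s => ‖deriv γ s‖ / ρ (γ s) with hf
  have hfnn : ∀ s, 0 ≤ f s := fun s => div_nonneg (norm_nonneg _) (hpos _).le
  have hint : ∀ a b : ℝ, 0 ≤ a → a ≤ b → b ≤ 1 → IntervalIntegrable f volume a b :=
    fun a b ha hab hb => intervalIntegrable_integrand hmeas hpos hrad hγ ha hab hb
  have key : ∀ u : ℝ, 0 < u → u ≤ 1 → (∀ s ∈ Ico (0:ℝ) u, dist (γ s) x < ρ x) →
      (C * ρ x)⁻¹ * ‖γ u - x‖ ≤ ∫ s in (0:ℝ)..u, f s := by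
    intro u hu0 hu1 hball
    have h1 : ∫ s in (0:ℝ)..u, ‖deriv γ s‖ / (C * ρ x) ≤ ∫ s in (0:ℝ)..u, f s := by
      refine intervalIntegral.integral_mono_ae_restrict hu0.le
        ((intervalIntegrable_norm_deriv hγ le_rfl hu0.le hu1).div_const _)
        (hint 0 u le_rfl hu0.le hu1) ?_
      have h0 : ∀ᵐ s : ℝ ∂(volume.restrict (Icc (0:ℝ) u)), s ≠ u :=
        ae_restrict_of_ae (measure_eq_zero_iff_ae_notMem.mp (measure_singleton u))
      filter_upwards [h0, ae_restrict_mem measurableSet_Icc] with s hsu hs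
      have hsIco : s ∈ Ico (0:ℝ) u := ⟨hs.1, lt_of_le_of_ne hs.2 hsu⟩
      have hρs : ρ (γ s) ≤ C * ρ x := (hrad x (γ s) (hball s hsIco)).2
      exact div_le_div_of_nonneg_left (norm_nonneg _) (hpos _) hρs
    have h2 : (C * ρ x)⁻¹ * ‖γ u - γ 0‖ ≤ ∫ s in (0:ℝ)..u, ‖deriv γ s‖ / (C * ρ x) := by
      rw [intervalIntegral.integral_div, div_eq_inv_mul, mul_comm ((C * ρ x)⁻¹) ‖γ u - γ 0‖,
        mul_comm ((C * ρ x)⁻¹)]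
      exact mul_le_mul_of_nonneg_right (chord hγ le_rfl hu0.le hu1)
        (inv_nonneg.2 (mul_pos hC hρx).le)
    rw [hx] at h2
    exact le_trans h2 h1
  by_cases hcase : ∀ s ∈ Icc (0:ℝ) 1, dist (γ s) x < ρ x
  · have h := key 1 one_pos le_rfl (fun s hs => hcase s (Ico_subset_Icc_self hs))
    rw [hy] at h
    refine le_trans ?_ h
    have heq : (C * ρ x)⁻¹ * ‖y - x‖ = C⁻¹ * (‖y - x‖ / ρ x) := by
      field_simp
    rw [heq]
    exact mul_le_mul_of_nonneg_left (min_le_left _ _) (inv_nonneg.2 hC.le)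
  · push_neg at hcase
    obtain ⟨s₀, hs₀, hs₀d⟩ := hcase
    set A : Set ℝ := Icc 0 1 ∩ (fun s => dist (γ s) x) ⁻¹' Ici (ρ x) with hA
    have hAclosed : IsClosed A :=
      ContinuousOn.preimage_isClosed_of_isClosed (f := fun s => dist (γ s) x) (continuous_dist.comp_continuousOn (ContinuousOn.prodMk hγ.1 continuousOn_const)) isClosed_Icc isClosed_Ici
    have hAne : A.Nonempty := ⟨s₀, hs₀, hs₀d⟩
    have hAbdd : BddBelow A := ⟨0, fun s hs => hs.1.1⟩
    set u := sInf A with hu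
    have huA : u ∈ A := hAclosed.csInf_mem hAne hAbdd
    have hu0' : 0 ≤ u := le_csInf hAne (fun b hb => hb.1.1)
    have hu0 : 0 < u := by
      rcases lt_or_eq_of_le hu0' with h | h
      · exact h
      · exfalso
        have h2 : ρ x ≤ dist (γ 0) x := by
          have := huA.2; rw [← h] at this; exact this
        rw [hx, dist_self] at h2
        linarith
    have hu1 : u ≤ 1 := huA.1.2
    have hball : ∀ s ∈ Ico (0:ℝ) u, dist (γ s) x < ρ x := by
      intro s hs
      by_contra h
      push_neg at h
      exact absurd (csInf_le hAbdd ⟨⟨hs.1, hs.2.le.trans hu1⟩, h⟩) (not_le.mpr hs.2)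
    have h := key u hu0 hu1 hball
    have hdist : ρ x ≤ ‖γ u - x‖ := by rw [← dist_eq_norm]; exact huA.2
    have hsplit : ∫ s in (0:ℝ)..u, f s ≤ ∫ s in (0:ℝ)..1, f s := by
      rw [← intervalIntegral.integral_add_adjacent_intervals
        (hint 0 u le_rfl hu0.le hu1) (hint u 1 hu0.le hu1 le_rfl)]
      have : (0:ℝ) ≤ ∫ s in u..1, f s :=
        intervalIntegral.integral_nonneg hu1 (fun s _ => hfnn s)
      linarith
    calc C⁻¹ * min (‖y - x‖ / ρ x) 1 ≤ C⁻¹ * 1 :=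
          mul_le_mul_of_nonneg_left (min_le_right _ _) (inv_nonneg.2 hC.le)
      _ = (C * ρ x)⁻¹ * ρ x := by field_simp
      _ ≤ (C * ρ x)⁻¹ * ‖γ u - x‖ :=
          mul_le_mul_of_nonneg_left hdist (inv_nonneg.2 (mul_pos hC hρx).le)
      _ ≤ ∫ s in (0:ℝ)..u, f s := h
      _ ≤ ∫ s in (0:ℝ)..1, f s := hsplit


lemma norm_deriv_comp (γ : ℝ → EuclideanSpace ℝ (Fin d)) {c : ℝ} (hc : c ≠ 0) (b s : ℝ) :
    ‖deriv (fun t => γ (c * t + b)) s‖ = |c| * ‖deriv γ (c * s + b)‖ := by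
  have hσ : HasDerivAt (fun t : ℝ => c * t + b) c s := by
    simpa using ((hasDerivAt_id s).const_mul c).add_const b
  by_cases h : DifferentiableAt ℝ γ (c * s + b)
  · have hcomp : HasDerivAt (fun t => γ (c * t + b)) (c • deriv γ (c * s + b)) s :=
      (h.hasDerivAt.scomp s hσ : HasDerivAt (γ ∘ fun t : ℝ => c * t + b) _ s)
    rw [hcomp.deriv, norm_smul, Real.norm_eq_abs]
  · have h2 : ¬ DifferentiableAt ℝ (fun t => γ (c * t + b)) s := by
      intro hdiff
      apply h
      have hinv : HasDerivAt (fun u : ℝ => c⁻¹ * (u - b)) c⁻¹ (c * s + b) := by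
        simpa using ((hasDerivAt_id (c * s + b)).sub_const b).const_mul c⁻¹
      have hs' : c⁻¹ * ((c * s + b) - b) = s := by field_simp; ring
      have hd2 : DifferentiableAt ℝ ((fun t => γ (c * t + b)) ∘ fun u : ℝ => c⁻¹ * (u - b))
          (c * s + b) := by
        refine DifferentiableAt.comp _ ?_ hinv.differentiableAt
        rw [hs']; exact hdiff
      have he : ((fun t => γ (c * t + b)) ∘ fun u : ℝ => c⁻¹ * (u - b)) = γ := by
        funext u
        simp only [Function.comp_apply]
        congr 1
        field_simp; ring
      rwa [he] at hd2
    rw [deriv_zero_of_not_differentiableAt h, deriv_zero_of_not_differentiableAt h2]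
    simp

lemma continuousOn_union_closed {α β : Type*} [TopologicalSpace α] [TopologicalSpace β]
    {s t : Set α} {f : α → β} (hs : IsClosed s) (ht : IsClosed t)
    (hfs : ContinuousOn f s) (hft : ContinuousOn f t) : ContinuousOn f (s ∪ t) := by
  intro z hz
  refine ContinuousWithinAt.union ?_ ?_
  · by_cases h : z ∈ s
    · exact hfs z h
    · exact continuousWithinAt_of_notMem_closure (by rwa [hs.closure_eq])
  · by_cases h : z ∈ t
    · exact hft z h
    · exact continuousWithinAt_of_notMem_closure (by rwa [ht.closure_eq])

lemma npos' {n : ℕ} {t : Fin (n+1) → ℝ} (ht0 : t 0 = 0) (ht1 : t (Fin.last n) = 1) :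
    0 < n := by
  rcases Nat.eq_zero_or_pos n with h | h
  · exfalso; subst h
    rw [show Fin.last 0 = 0 from rfl, ht0] at ht1
    norm_num at ht1
  · exact h

lemma mem_S_symm {x y : EuclideanSpace ℝ (Fin d)} {L : ℝ} (hL : L ∈ S ρ x y) :
    L ∈ S ρ y x := by
  obtain ⟨γ, hγ, hx, hy, rfl⟩ := hL
  obtain ⟨hc, n, t, ht, ht0, ht1, hp⟩ := hγ
  have hrev : ∀ s : ℝ, ‖deriv (fun u => γ (1 - u)) s‖ = ‖deriv γ (1 - s)‖ := by
    intro s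
    have he : (fun u : ℝ => γ (1 - u)) = (fun u : ℝ => γ ((-1) * u + 1)) := by
      funext u; congr 1; ring
    rw [he, norm_deriv_comp γ (by norm_num) 1 s, abs_neg, abs_one, one_mul,
      show (-1:ℝ) * s + 1 = 1 - s by ring]
  refine ⟨fun s => γ (1 - s), ⟨?_, n, fun i => 1 - t i.rev, ?_, ?_, ?_, ?_⟩,
    by simpa using hy, by simpa using hx, ?_⟩
  · refine hc.comp ((continuous_const.sub continuous_id).continuousOn) ?_
    intro s hs
    exact ⟨by linarith [hs.2], by linarith [hs.1]⟩
  · intro i j hij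
    have : t j.rev < t i.rev := ht (Fin.rev_lt_rev.mpr hij)
    simpa using this
  · simp [Fin.rev_zero, ht1]
  · simp [Fin.rev_last, ht0]
  · intro i
    have heq : Icc (1 - t i.castSucc.rev) (1 - t i.succ.rev)
        = Icc (1 - t i.rev.succ) (1 - t i.rev.castSucc) := by
      rw [Fin.rev_castSucc, Fin.rev_succ]
    rw [heq]
    refine ContDiffOn.congr (f := (γ ∘ fun s : ℝ => 1 - s)) ?_ (fun s _ => rfl)
    refine (hp i.rev).comp ((contDiff_const.sub contDiff_id).contDiffOn) ?_
    intro s hs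
    simp only [mem_Icc] at hs ⊢
    constructor <;> linarith [hs.1, hs.2]
  · have h1 : ∀ s ∈ uIcc (0:ℝ) 1,
        ‖deriv (fun u => γ (1 - u)) s‖ / ρ (γ (1 - s))
          = (fun u => ‖deriv γ u‖ / ρ (γ u)) (1 - s) := by
      intro s _
      rw [hrev s]
    rw [intervalIntegral.integral_congr h1]
    have h2 := intervalIntegral.integral_comp_sub_left (a := 0) (b := 1)
      (fun u => ‖deriv γ u‖ / ρ (γ u)) 1
    simpa using h2.symm

lemma dRho_eq_sInf (ρ : EuclideanSpace ℝ (Fin d) → ℝ) (x y : EuclideanSpace ℝ (Fin d)) :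
    True := trivial


lemma mem_S_concat (hmeas : Measurable ρ) (hpos : ∀ x, 0 < ρ x)
    (hrad : ∀ x y, dist y x < ρ x → C⁻¹ * ρ x ≤ ρ y ∧ ρ y ≤ C * ρ x)
    {x y z : EuclideanSpace ℝ (Fin d)} {L₁ L₂ : ℝ}
    (h₁ : L₁ ∈ S ρ x y) (h₂ : L₂ ∈ S ρ y z) : L₁ + L₂ ∈ S ρ x z := by
  classical
  obtain ⟨γ₁, hγ₁, hx₁, hy₁, rfl⟩ := h₁
  obtain ⟨γ₂, hγ₂, hy₂, hz₂, rfl⟩ := h₂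
  set γ : ℝ → EuclideanSpace ℝ (Fin d) :=
    fun s => if s ≤ 1/2 then γ₁ (2*s) else γ₂ (2*s - 1) with hγdef
  have hE1 : EqOn γ (fun s => γ₁ (2*s)) (Iic (1/2 : ℝ)) := fun s hs => if_pos hs
  have hE2 : EqOn γ (fun s => γ₂ (2*s - 1)) (Ici (1/2 : ℝ)) := by
    intro s hs
    rcases eq_or_lt_of_le (mem_Ici.mp hs : (1:ℝ)/2 ≤ s) with h | h
    · subst h
      rw [hγdef]
      norm_num [hy₁, hy₂]
    · simp only [hγdef, if_neg (not_le.mpr h)]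
  obtain ⟨hc₁, n₁, t₁, ht₁, ht₁0, ht₁1, hp₁⟩ := hγ₁
  obtain ⟨hc₂, n₂, t₂, ht₂, ht₂0, ht₂1, hp₂⟩ := hγ₂
  have hn₁ : 0 < n₁ := npos' ht₁0 ht₁1
  have hn₂ : 0 < n₂ := npos' ht₂0 ht₂1
  have ht₁le : ∀ i : Fin (n₁+1), t₁ i ≤ 1 := by
    intro i; rw [← ht₁1]; exact ht₁.monotone (Fin.le_last i)
  have ht₂ge : ∀ i : Fin (n₂+1), 0 ≤ t₂ i := by
    intro i; rw [← ht₂0]; exact ht₂.monotone (Fin.zero_le i)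
  -- continuity
  have hcont1 : ContinuousOn γ (Icc (0:ℝ) (1/2)) := by
    refine ContinuousOn.congr ?_ (hE1.mono (fun s hs => hs.2))
    refine hc₁.comp ((continuous_const.mul continuous_id).continuousOn) ?_
    intro s hs
    simp only [mem_Icc] at hs ⊢
    constructor <;> linarith [hs.1, hs.2]
  have hcont2 : ContinuousOn γ (Icc (1/2:ℝ) 1) := by
    refine ContinuousOn.congr ?_ (hE2.mono (fun s hs => hs.1))
    refine hc₂.comp (((continuous_const.mul continuous_id).sub continuous_const).continuousOn) ?_
    intro s hs
    simp only [mem_Icc] at hs ⊢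
    constructor <;> linarith [hs.1, hs.2]
  have hcont : ContinuousOn γ (Icc (0:ℝ) 1) :=
    (continuousOn_union_closed isClosed_Icc isClosed_Icc hcont1 hcont2).mono
      (Icc_subset_Icc_union_Icc (b := 1/2))
  -- partition
  set T : Fin (n₁ + n₂ + 1) → ℝ := fun i =>
    if h : (i:ℕ) ≤ n₁ then t₁ ⟨i, by omega⟩ / 2 else (1 + t₂ ⟨(i:ℕ) - n₁, by omega⟩) / 2
    with hT
  have hTmono : StrictMono T := by
    intro i j hij
    have hij' : (i:ℕ) < (j:ℕ) := hij
    by_cases hi : (i:ℕ) ≤ n₁ <;> by_cases hj : (j:ℕ) ≤ n₁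
    · rw [hT]; simp only [dif_pos hi, dif_pos hj]
      have : t₁ ⟨i, by omega⟩ < t₁ ⟨j, by omega⟩ := ht₁ (by simp [Fin.mk_lt_mk]; omega)
      linarith
    · rw [hT]; simp only [dif_pos hi, dif_neg hj]
      have h1 : t₁ ⟨i, by omega⟩ ≤ 1 := ht₁le _
      have h2 : (0:ℝ) < t₂ ⟨(j:ℕ) - n₁, by omega⟩ := by
        rw [← ht₂0]
        exact ht₂ (by simp [Fin.lt_def]; omega)
      linarith
    · omega
    · rw [hT]; simp only [dif_neg hi, dif_neg hj]
      have : t₂ ⟨(i:ℕ) - n₁, by omega⟩ < t₂ ⟨(j:ℕ) - n₁, by omega⟩ := by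
        refine ht₂ ?_
        simp only [Fin.mk_lt_mk]
        omega
      linarith
  have hT0 : T 0 = 0 := by
    rw [hT]
    have h0 : ((0 : Fin (n₁ + n₂ + 1)) : ℕ) = 0 := rfl
    simp only [h0, dif_pos (Nat.zero_le n₁)]
    have : (⟨0, by omega⟩ : Fin (n₁+1)) = 0 := rfl
    rw [this, ht₁0]; norm_num
  have hTlast : T (Fin.last (n₁ + n₂)) = 1 := by
    rw [hT]
    have h0 : ((Fin.last (n₁ + n₂)) : ℕ) = n₁ + n₂ := rfl
    simp only [h0, dif_neg (by omega : ¬ (n₁ + n₂ ≤ n₁))]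
    have : (⟨n₁ + n₂ - n₁, by omega⟩ : Fin (n₂+1)) = Fin.last n₂ := by
      apply Fin.ext; simp only [Fin.val_last]; omega
    rw [this, ht₂1]; norm_num
  have hpieces : ∀ i : Fin (n₁ + n₂), ContDiffOn ℝ 1 γ (Icc (T i.castSucc) (T i.succ)) := by
    intro i
    by_cases hi : (i:ℕ) < n₁
    · set j : Fin n₁ := ⟨i, hi⟩ with hj
      have e1 : T i.castSucc = t₁ j.castSucc / 2 := by
        rw [hT]
        have hjc : j.castSucc = (⟨(i:ℕ), by omega⟩ : Fin (n₁+1)) := by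
          apply Fin.ext; simp [hj]
        rw [hjc]
        have : ((i.castSucc : Fin (n₁+n₂+1)) : ℕ) = (i:ℕ) := rfl
        simp only [this, dif_pos (by omega : (i:ℕ) ≤ n₁)]
      have e2 : T i.succ = t₁ j.succ / 2 := by
        rw [hT]
        have hjs : j.succ = (⟨(i:ℕ) + 1, by omega⟩ : Fin (n₁+1)) := by
          apply Fin.ext; simp [hj]
        rw [hjs]
        have : ((i.succ : Fin (n₁+n₂+1)) : ℕ) = (i:ℕ) + 1 := rfl
        simp only [this, dif_pos (by omega : (i:ℕ) + 1 ≤ n₁)]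
      rw [e1, e2]
      have hsub : Icc (t₁ j.castSucc / 2) (t₁ j.succ / 2) ⊆ Iic (1/2 : ℝ) := by
        intro s hs
        have := ht₁le j.succ
        exact le_trans hs.2 (by linarith)
      refine ContDiffOn.congr (f := ((fun u => γ₁ u) ∘ fun s : ℝ => 2 * s)) ?_
        (fun s hs => hE1 (hsub hs))
      refine (hp₁ j).comp ((contDiff_const.mul contDiff_id).contDiffOn) ?_
      intro s hs
      simp only [mem_Icc] at hs ⊢
      constructor <;> linarith [hs.1, hs.2]
    · set j : Fin n₂ := ⟨(i:ℕ) - n₁, by omega⟩ with hj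
      have e1 : T i.castSucc = (1 + t₂ j.castSucc) / 2 := by
        rw [hT]
        have hv : ((i.castSucc : Fin (n₁+n₂+1)) : ℕ) = (i:ℕ) := rfl
        rcases eq_or_lt_of_le (by omega : n₁ ≤ (i:ℕ)) with h | h
        · simp only [hv, dif_pos (by omega : (i:ℕ) ≤ n₁)]
          have hA : (⟨(i:ℕ), by omega⟩ : Fin (n₁+1)) = Fin.last n₁ := by
            apply Fin.ext; simp; omega
          have hB : j.castSucc = (0 : Fin (n₂+1)) := by
            apply Fin.ext; simp [hj]; omega
          rw [hA, ht₁1, hB, ht₂0]; norm_num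
        · have hjc : j.castSucc = (⟨(i:ℕ) - n₁, by omega⟩ : Fin (n₂+1)) := by
            apply Fin.ext; simp [hj]
          rw [hjc]
          simp only [hv, dif_neg (by omega : ¬ ((i:ℕ) ≤ n₁))]
      have e2 : T i.succ = (1 + t₂ j.succ) / 2 := by
        rw [hT]
        have hjs : j.succ = (⟨(i:ℕ) + 1 - n₁, by omega⟩ : Fin (n₂+1)) := by
          apply Fin.ext; simp [hj]; omega
        rw [hjs]
        have hv : ((i.succ : Fin (n₁+n₂+1)) : ℕ) = (i:ℕ) + 1 := rfl
        simp only [hv, dif_neg (by omega : ¬ ((i:ℕ) + 1 ≤ n₁))]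
      rw [e1, e2]
      have hsub : Icc ((1 + t₂ j.castSucc) / 2) ((1 + t₂ j.succ) / 2) ⊆ Ici (1/2 : ℝ) := by
        intro s hs
        have := ht₂ge j.castSucc
        exact le_trans (by linarith) hs.1
      refine ContDiffOn.congr (f := ((fun u => γ₂ u) ∘ fun s : ℝ => 2 * s - 1)) ?_
        (fun s hs => hE2 (hsub hs))
      refine (hp₂ j).comp (((contDiff_const.mul contDiff_id).sub contDiff_const).contDiffOn) ?_
      intro s hs
      simp only [mem_Icc] at hs ⊢
      constructor <;> linarith [hs.1, hs.2]
  have hγpc : PiecewiseC1 γ := ⟨hcont, n₁ + n₂, T, hTmono, hT0, hTlast, hpieces⟩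
  refine ⟨γ, hγpc, ?_, ?_, ?_⟩
  · have : γ 0 = γ₁ 0 := by
      rw [hγdef]; norm_num
    rw [this, hx₁]
  · have : γ 1 = γ₂ 1 := by
      rw [hγdef]; norm_num
    rw [this, hz₂]
  -- the integral identity
  · have hint : ∀ a b : ℝ, 0 ≤ a → a ≤ b → b ≤ 1 →
        IntervalIntegrable (fun s => ‖deriv γ s‖ / ρ (γ s)) volume a b :=
      fun a b ha hab hb => intervalIntegrable_integrand hmeas hpos hrad hγpc ha hab hb
    have hsplit : ∫ s in (0:ℝ)..1, ‖deriv γ s‖ / ρ (γ s)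
        = (∫ s in (0:ℝ)..(1/2), ‖deriv γ s‖ / ρ (γ s))
          + ∫ s in (1/2:ℝ)..1, ‖deriv γ s‖ / ρ (γ s) :=
      (intervalIntegral.integral_add_adjacent_intervals
        (hint 0 (1/2) le_rfl (by norm_num) (by norm_num))
        (hint (1/2) 1 (by norm_num) (by norm_num) le_rfl)).symm
    have hpart1 : ∫ s in (0:ℝ)..(1/2), ‖deriv γ s‖ / ρ (γ s)
        = ∫ u in (0:ℝ)..1, ‖deriv γ₁ u‖ / ρ (γ₁ u) := by
      have hae : ∀ᵐ s : ℝ, s ∈ Ι (0:ℝ) (1/2) →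
          ‖deriv γ s‖ / ρ (γ s) = 2 * (‖deriv γ₁ (2*s)‖ / ρ (γ₁ (2*s))) := by
        have h0 : ∀ᵐ s : ℝ, s ≠ (1/2 : ℝ) :=
          measure_eq_zero_iff_ae_notMem.mp (measure_singleton _)
        filter_upwards [h0] with s hs hsI
        rw [uIoc_of_le (by norm_num : (0:ℝ) ≤ 1/2)] at hsI
        have hslt : s < 1/2 := lt_of_le_of_ne hsI.2 hs
        have hev : γ =ᶠ[nhds s] (fun u => γ₁ (2*u)) :=
          Filter.eventuallyEq_of_mem (Iio_mem_nhds hslt)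
            (hE1.mono Iio_subset_Iic_self)
        have hd : deriv γ s = deriv (fun u => γ₁ (2*u)) s := hev.deriv_eq
        have hval : γ s = γ₁ (2*s) := hE1 (le_of_lt hslt)
        rw [hd, hval]
        have he : (fun u : ℝ => γ₁ (2*u)) = (fun u : ℝ => γ₁ (2*u + 0)) := by
          norm_num
        rw [he, norm_deriv_comp γ₁ (by norm_num) 0 s]
        rw [show (2:ℝ)*s + 0 = 2*s by ring]
        rw [abs_of_pos (by norm_num : (0:ℝ) < 2), mul_div_assoc]
      rw [intervalIntegral.integral_congr_ae hae,
        intervalIntegral.integral_const_mul]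
      have h2 := intervalIntegral.integral_comp_mul_left (a := 0) (b := 1/2)
        (fun u => ‖deriv γ₁ u‖ / ρ (γ₁ u)) (two_ne_zero)
      rw [show (2:ℝ) * 0 = 0 by norm_num, show (2:ℝ) * (1/2) = 1 by norm_num] at h2
      rw [h2, smul_eq_mul]
      ring
    have hpart2 : ∫ s in (1/2:ℝ)..1, ‖deriv γ s‖ / ρ (γ s)
        = ∫ u in (0:ℝ)..1, ‖deriv γ₂ u‖ / ρ (γ₂ u) := by
      have hae : ∀ᵐ s : ℝ, s ∈ Ι (1/2:ℝ) 1 →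
          ‖deriv γ s‖ / ρ (γ s) = 2 * (‖deriv γ₂ (2*s + -1)‖ / ρ (γ₂ (2*s + -1))) := by
        refine Filter.Eventually.of_forall ?_
        intro s hsI
        rw [uIoc_of_le (by norm_num : (1/2:ℝ) ≤ 1)] at hsI
        have hslt : (1/2:ℝ) < s := hsI.1
        have hev : γ =ᶠ[nhds s] (fun u => γ₂ (2*u - 1)) :=
          Filter.eventuallyEq_of_mem (Ioi_mem_nhds hslt)
            (hE2.mono Ioi_subset_Ici_self)
        have hd : deriv γ s = deriv (fun u => γ₂ (2*u - 1)) s := hev.deriv_eq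
        have hval : γ s = γ₂ (2*s - 1) := hE2 (le_of_lt hslt)
        rw [hd, hval]
        have he : (fun u : ℝ => γ₂ (2*u - 1)) = (fun u : ℝ => γ₂ (2*u + -1)) := by
          funext u; rw [sub_eq_add_neg]
        rw [he, norm_deriv_comp γ₂ (by norm_num) (-1) s,
          abs_of_pos (by norm_num : (0:ℝ) < 2), mul_div_assoc,
          show (2:ℝ)*s - 1 = 2*s + -1 by ring]
      rw [intervalIntegral.integral_congr_ae hae,
        intervalIntegral.integral_const_mul]
      have h2 := intervalIntegral.integral_comp_mul_add (a := 1/2) (b := 1)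
        (fun u => ‖deriv γ₂ u‖ / ρ (γ₂ u)) (two_ne_zero) (-1)
      rw [show (2:ℝ) * (1/2) + (-1) = 0 by norm_num, show (2:ℝ) * 1 + (-1) = 1 by norm_num] at h2
      rw [h2, smul_eq_mul]
      ring
    rw [hsplit, hpart1, hpart2]

end StmtAux

/-- If `ρ` is a Borel radius function with constant `C`, then `d_ρ` is a metric and for
`r ≤ 1`: `B_ρ(x, C⁻¹r) ⊆ B(x, rρ(x)) ⊆ B_ρ(x, Cr)`. -/
theorem stmt_14 {d : ℕ} (ρ : EuclideanSpace ℝ (Fin d) → ℝ) (C : ℝ)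
    (hmeas : Measurable ρ) (hpos : ∀ x, 0 < ρ x)
    (hrad : ∀ x y, dist y x < ρ x → C⁻¹ * ρ x ≤ ρ y ∧ ρ y ≤ C * ρ x) :
    (∀ x y, dRho ρ x y = 0 ↔ x = y) ∧
    (∀ x y, dRho ρ x y = dRho ρ y x) ∧
    (∀ x y z, dRho ρ x z ≤ dRho ρ x y + dRho ρ y z) ∧
    (∀ (x : EuclideanSpace ℝ (Fin d)) (r : ℝ), r ≤ 1 →
      {y | dRho ρ x y < C⁻¹ * r} ⊆ Metric.ball x (r * ρ x) ∧
      Metric.ball x (r * ρ x) ⊆ {y | dRho ρ x y < C * r}) := by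
  have hC1 : 1 ≤ C := StmtAux.one_le_C hpos hrad
  have hC : (0:ℝ) < C := lt_of_lt_of_le one_pos hC1
  have hSeq : ∀ x y, dRho ρ x y = sInf (StmtAux.S ρ x y) := fun x y => rfl
  have hnonneg : ∀ x y, 0 ≤ dRho ρ x y := fun x y =>
    le_csInf (StmtAux.S_nonempty x y) (StmtAux.S_nonneg hpos)
  have hlb : ∀ x y, C⁻¹ * min (‖y - x‖ / ρ x) 1 ≤ dRho ρ x y := by
    intro x y
    rw [hSeq]
    refine le_csInf (StmtAux.S_nonempty x y) ?_
    rintro L ⟨γ, hγ, hx, hy, rfl⟩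
    exact StmtAux.lower_bound hmeas hpos hrad hγ hx hy
  refine ⟨?_, ?_, ?_, ?_⟩
  · intro x y
    constructor
    · intro h
      by_contra hne
      have hxy : 0 < ‖y - x‖ := by
        rw [norm_pos_iff, sub_ne_zero]
        exact fun hh => hne hh.symm
      have hmin : 0 < min (‖y - x‖ / ρ x) 1 := lt_min (div_pos hxy (hpos x)) one_pos
      have hl := hlb x y
      rw [h] at hl
      nlinarith [inv_pos.2 hC]
    · rintro rfl
      refine le_antisymm ?_ (hnonneg x x)
      rw [hSeq]
      refine csInf_le (StmtAux.bddBelow_S hpos) ?_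
      refine ⟨fun _ => x, contDiff_const.piecewiseC1, rfl, rfl, ?_⟩
      simp
  · intro x y
    rw [hSeq, hSeq]
    congr 1
    exact Set.Subset.antisymm (fun L hL => StmtAux.mem_S_symm hL)
      (fun L hL => StmtAux.mem_S_symm hL)
  · intro x y z
    refine le_of_forall_pos_le_add ?_
    intro ε hε
    obtain ⟨L₁, hL₁, hlt₁⟩ := exists_lt_of_csInf_lt (StmtAux.S_nonempty x y)
      (show sInf (StmtAux.S ρ x y) < dRho ρ x y + ε/2 by rw [← hSeq]; linarith)
    obtain ⟨L₂, hL₂, hlt₂⟩ := exists_lt_of_csInf_lt (StmtAux.S_nonempty y z)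
      (show sInf (StmtAux.S ρ y z) < dRho ρ y z + ε/2 by rw [← hSeq]; linarith)
    have hmem := StmtAux.mem_S_concat hmeas hpos hrad hL₁ hL₂
    have hle : dRho ρ x z ≤ L₁ + L₂ := by
      rw [hSeq]; exact csInf_le (StmtAux.bddBelow_S hpos) hmem
    linarith
  · intro x r hr
    constructor
    · intro y hy
      simp only [Set.mem_setOf_eq] at hy
      have h1 := hlb x y
      have h2 : min (‖y - x‖ / ρ x) 1 < r :=
        (mul_lt_mul_iff_right₀ (inv_pos.2 hC)).mp (lt_of_le_of_lt h1 hy)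
      have hdiv : ‖y - x‖ / ρ x < r := by
        rcases min_lt_iff.mp h2 with h | h
        · exact h
        · linarith
      rw [Metric.mem_ball, dist_eq_norm]
      exact (div_lt_iff₀ (hpos x)).mp hdiv
    · intro y hy
      rw [Metric.mem_ball, dist_eq_norm] at hy
      have hr0 : 0 < r := by
        by_contra h
        push_neg at h
        have : r * ρ x ≤ 0 := mul_nonpos_of_nonpos_of_nonneg h (hpos x).le
        have := norm_nonneg (y - x)
        linarith
      simp only [Set.mem_setOf_eq]
      have hseg : dRho ρ x y ≤ ∫ s in (0:ℝ)..1, ‖y - x‖ / ρ (x + s • (y - x)) := by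
        rw [hSeq]
        exact csInf_le (StmtAux.bddBelow_S hpos) (StmtAux.seg_mem x y)
      have hball : ∀ s ∈ Set.Icc (0:ℝ) 1, C⁻¹ * ρ x ≤ ρ (x + s • (y - x)) := by
        intro s hs
        refine (hrad x _ ?_).1
        rw [dist_eq_norm, add_sub_cancel_left, norm_smul, Real.norm_eq_abs,
          abs_of_nonneg hs.1]
        calc s * ‖y - x‖ ≤ 1 * ‖y - x‖ :=
              mul_le_mul_of_nonneg_right hs.2 (norm_nonneg _)
          _ = ‖y - x‖ := one_mul _
          _ < r * ρ x := hy
          _ ≤ 1 * ρ x := mul_le_mul_of_nonneg_right hr (hpos x).le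
          _ = ρ x := one_mul _
      have hInt : IntervalIntegrable (fun s => ‖y - x‖ / ρ (x + s • (y - x))) volume 0 1 := by
        have h := StmtAux.intervalIntegrable_integrand hmeas hpos hrad
          (StmtAux.seg_piecewiseC1 x y) le_rfl zero_le_one le_rfl
        have he : (fun s => ‖deriv (fun u : ℝ => x + u • (y - x)) s‖ / ρ (x + s • (y - x)))
            = (fun s => ‖y - x‖ / ρ (x + s • (y - x))) := by
          funext s
          rw [(StmtAux.seg_hasDerivAt x y s).deriv]
        rwa [he] at h
      have hub : ∫ s in (0:ℝ)..1, ‖y - x‖ / ρ (x + s • (y - x))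
          ≤ ‖y - x‖ / (C⁻¹ * ρ x) := by
        have hmono : ∀ s ∈ Set.Icc (0:ℝ) 1,
            ‖y - x‖ / ρ (x + s • (y - x)) ≤ ‖y - x‖ / (C⁻¹ * ρ x) := fun s hs =>
          div_le_div_of_nonneg_left (norm_nonneg _)
            (mul_pos (inv_pos.2 hC) (hpos x)) (hball s hs)
        calc ∫ s in (0:ℝ)..1, ‖y - x‖ / ρ (x + s • (y - x))
            ≤ ∫ _ in (0:ℝ)..1, ‖y - x‖ / (C⁻¹ * ρ x) :=
              intervalIntegral.integral_mono_on zero_le_one hInt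
                intervalIntegrable_const hmono
          _ = ‖y - x‖ / (C⁻¹ * ρ x) := by simp
      have hfinal : ‖y - x‖ / (C⁻¹ * ρ x) < C * r := by
        rw [div_lt_iff₀ (mul_pos (inv_pos.2 hC) (hpos x))]
        calc ‖y - x‖ < r * ρ x := hy
          _ = C * r * (C⁻¹ * ρ x) := by field_simp
      linarith
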